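/- Under the rank-one update: with W = Aᵀvxᵀ, r = AWx − b, Z = W − αAᵀrxᵀ, y = x − αWᵀAᵀr, and y ≠ 0, setting u = (1/‖y‖²)(v − αr)xᵀy gives Z = Aᵀuyᵀ. -/

import Mathlib

open Matrix

theorem stmt_9 {n d : ℕ} (A : Matrix (Fin n) (Fin d) ℝ) (b : Fin n → ℝ)
    (α : ℝ) (v : Fin n → ℝ) (x : Fin d → ℝ) (hx : x ≠ 0)
    (W : Matrix (Fin d) (Fin d) ℝ) (hW : W = Aᵀ * vecMulVec v x)
    (r : Fin n → ℝ) (hr : r = A.mulVec (W.mulVec x) - b)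
    (Z : Matrix (Fin d) (Fin d) ℝ) (hZ : Z = W - α • (Aᵀ * vecMulVec r x))
    (y : Fin d → ℝ) (hy : y = x - α • Wᵀ.mulVec (Aᵀ.mulVec r)) (hy0 : y ≠ 0)
    (u : Fin n → ℝ) (hu : u = ((y ⬝ᵥ y)⁻¹ * (x ⬝ᵥ y)) • (v - α • r)) :
    Z = Aᵀ * vecMulVec u y := by
  set s : ℝ := (Aᵀ.mulVec v) ⬝ᵥ (Aᵀ.mulVec r) with hs
  have key : Wᵀ.mulVec (Aᵀ.mulVec r) = s • x := by
    funext j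
    simp only [hW, hs, mulVec, dotProduct, transpose_apply, mul_apply, vecMulVec_apply,
      Pi.smul_apply, smul_eq_mul, Finset.sum_mul, Finset.mul_sum]
    exact Finset.sum_congr rfl fun i _ => Finset.sum_congr rfl fun k _ =>
      Finset.sum_congr rfl fun m _ => by ring
  have hyx : y = (1 - α * s) • x := by
    rw [hy, key]; funext j; simp; ring
  have ht : (1 - α * s) ≠ 0 := by
    intro h; apply hy0; rw [hyx, h, zero_smul]
  have hxx : x ⬝ᵥ x ≠ 0 := by
    simpa [dotProduct_self_eq_zero] using hx
  have hyy : y ⬝ᵥ y = (1 - α * s) * ((1 - α * s) * (x ⬝ᵥ x)) := by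
    rw [hyx]; simp [smul_dotProduct, dotProduct_smul]
  have hxy : x ⬝ᵥ y = (1 - α * s) * (x ⬝ᵥ x) := by
    rw [hyx]; simp [dotProduct_smul]
  have hu' : u = (1 - α * s)⁻¹ • (v - α • r) := by
    rw [hu, hyy, hxy]
    congr 1
    field_simp
  rw [hZ, hW, hu', hyx]
  funext i j
  simp only [Matrix.sub_apply, Pi.smul_apply, smul_eq_mul, mul_apply, vecMulVec_apply,
    transpose_apply, Pi.sub_apply, Matrix.smul_apply, Finset.mul_sum]
  rw [← Finset.sum_sub_distrib]
  apply Finset.sum_congr rfl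
  intro k _
  field_simp
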